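/- Let H = ∇²_u cos(u,v) be the Euclidean Hessian of the cosine similarity with v ≠ 0 fixed, evaluated at u ≠ 0 with u and v linearly independent. Then H leaves span{u,v} invariant, every vector orthogonal to both u and v is an eigenvector with eigenvalue −(uᵀv)/(‖u‖³‖v‖), and the two eigenvalues of H restricted to span{u,v} are (−α ± √(4−3α²))/(2‖u‖²), where α = cos(u,v). -/

import Mathlib

open Matrix

variable {d : ℕ}

noncomputable def enormE (x : Fin d → ℝ) : ℝ := Real.sqrt (x ⬝ᵥ x)

noncomputable def ecos (u v : Fin d → ℝ) : ℝ := (u ⬝ᵥ v) / (enormE u * enormE v)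

/-- The Euclidean Hessian of `u ↦ cos(u, v)`:
`H = 3 (uᵀv/(‖u‖⁵‖v‖)) uuᵀ − (uᵀv/(‖u‖³‖v‖)) I − (1/(‖u‖³‖v‖)) (uvᵀ + vuᵀ)`. -/
noncomputable def cosHessE (u v : Fin d → ℝ) : Matrix (Fin d) (Fin d) ℝ :=
  (3 * ((u ⬝ᵥ v) / ((enormE u) ^ 5 * enormE v))) • vecMulVec u u
    - ((u ⬝ᵥ v) / ((enormE u) ^ 3 * enormE v)) • (1 : Matrix (Fin d) (Fin d) ℝ)
    - (1 / ((enormE u) ^ 3 * enormE v)) • (vecMulVec u v + vecMulVec v u)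

lemma vecMulVec_mulVec' (a b w : Fin d → ℝ) : (vecMulVec a b) *ᵥ w = (b ⬝ᵥ w) • a := by
  ext i
  simp [vecMulVec_apply, mulVec, dotProduct, Finset.mul_sum, mul_assoc, mul_comm, mul_left_comm]

lemma hess_mulVec (u v w : Fin d → ℝ) :
    (cosHessE u v) *ᵥ w =
      (3 * ((u ⬝ᵥ v) / ((enormE u) ^ 5 * enormE v)) * (u ⬝ᵥ w)) • u
        - ((u ⬝ᵥ v) / ((enormE u) ^ 3 * enormE v)) • w
        - ((1 / ((enormE u) ^ 3 * enormE v)) * (v ⬝ᵥ w)) • u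
        - ((1 / ((enormE u) ^ 3 * enormE v)) * (u ⬝ᵥ w)) • v := by
  simp only [cosHessE, sub_mulVec, add_mulVec, smul_mulVec, one_mulVec,
    vecMulVec_mulVec', smul_smul]
  module

lemma dot_combo (x u v : Fin d → ℝ) (a b : ℝ) :
    x ⬝ᵥ (a • u + b • v) = a * (x ⬝ᵥ u) + b * (x ⬝ᵥ v) := by
  simp only [dotProduct_add, dotProduct_smul, smul_eq_mul]

lemma eigen_combo (u v : Fin d → ℝ) (a b lam : ℝ)
    (h1 : 3 * ((u ⬝ᵥ v) / ((enormE u) ^ 5 * enormE v)) * (a * (u ⬝ᵥ u) + b * (u ⬝ᵥ v))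
        - ((u ⬝ᵥ v) / ((enormE u) ^ 3 * enormE v)) * a
        - (1 / ((enormE u) ^ 3 * enormE v)) * (a * (u ⬝ᵥ v) + b * (v ⬝ᵥ v)) = lam * a)
    (h2 : -(((u ⬝ᵥ v) / ((enormE u) ^ 3 * enormE v)) * b)
        - (1 / ((enormE u) ^ 3 * enormE v)) * (a * (u ⬝ᵥ u) + b * (u ⬝ᵥ v)) = lam * b) :
    (cosHessE u v) *ᵥ (a • u + b • v) = lam • (a • u + b • v) := by
  rw [hess_mulVec, dot_combo u u v, dot_combo v u v, dotProduct_comm v u]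
  calc (3 * ((u ⬝ᵥ v) / ((enormE u) ^ 5 * enormE v)) * (a * (u ⬝ᵥ u) + b * (u ⬝ᵥ v))) • u
        - ((u ⬝ᵥ v) / ((enormE u) ^ 3 * enormE v)) • (a • u + b • v)
        - ((1 / ((enormE u) ^ 3 * enormE v)) * (a * (u ⬝ᵥ v) + b * (v ⬝ᵥ v))) • u
        - ((1 / ((enormE u) ^ 3 * enormE v)) * (a * (u ⬝ᵥ u) + b * (u ⬝ᵥ v))) • v
      = (3 * ((u ⬝ᵥ v) / ((enormE u) ^ 5 * enormE v)) * (a * (u ⬝ᵥ u) + b * (u ⬝ᵥ v))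
          - ((u ⬝ᵥ v) / ((enormE u) ^ 3 * enormE v)) * a
          - (1 / ((enormE u) ^ 3 * enormE v)) * (a * (u ⬝ᵥ v) + b * (v ⬝ᵥ v))) • u
        + (-(((u ⬝ᵥ v) / ((enormE u) ^ 3 * enormE v)) * b)
          - (1 / ((enormE u) ^ 3 * enormE v)) * (a * (u ⬝ᵥ u) + b * (u ⬝ᵥ v))) • v := by
        module
    _ = (lam * a) • u + (lam * b) • v := by rw [h1, h2]
    _ = lam • (a • u + b • v) := by module

lemma h1_fact (n m c s r lam a b α : ℝ) (hn : n ≠ 0) (hm : m ≠ 0)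
    (hc : c = α * (n * m)) (hs2 : s ^ 2 = 1) (hr2 : r ^ 2 = 4 - 3 * α ^ 2)
    (hlam : lam = (-α + s * r) / (2 * n ^ 2))
    (ha : a = lam + 2 * c / (n ^ 3 * m)) (hb : b = -1 / (n * m)) :
    3 * (c / (n ^ 5 * m)) * (a * n ^ 2 + b * c) - (c / (n ^ 3 * m)) * a
      - (1 / (n ^ 3 * m)) * (a * c + b * m ^ 2) = lam * a := by
  have e1 : 2 * n ^ 2 * lam + α = s * r := by rw [hlam]; field_simp; ring
  have hkey : n ^ 4 * lam ^ 2 + n ^ 2 * α * lam + α ^ 2 - 1 = 0 := by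
    have e2 : (2 * n ^ 2 * lam + α) ^ 2 = 4 - 3 * α ^ 2 := by
      rw [e1, mul_pow, hs2, hr2]; ring
    linear_combination e2 / 4
  subst ha hb hc
  field_simp
  linear_combination (-1) * hkey

lemma h2_fact (n m c lam a b : ℝ) (hn : n ≠ 0) (hm : m ≠ 0)
    (ha : a = lam + 2 * c / (n ^ 3 * m)) (hb : b = -1 / (n * m)) :
    -((c / (n ^ 3 * m)) * b) - (1 / (n ^ 3 * m)) * (a * n ^ 2 + b * c) = lam * b := by
  subst ha hb
  field_simp
  ring

/-- The Euclidean Hessian `H` of `u ↦ cos(u,v)` (with `u, v` linearly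
independent) leaves `span{u,v}` invariant; every vector orthogonal to both `u` and `v` is
an eigenvector with eigenvalue `−(uᵀv)/(‖u‖³‖v‖)`; and each of the two numbers
`(−α ± √(4−3α²))/(2‖u‖²)`, `α = cos(u,v)`, is an eigenvalue of `H` restricted to
`span{u,v}` (i.e. admits a nonzero eigenvector lying in `span{u,v}`). -/
theorem cosHess_spectrum (u v : Fin d → ℝ) (hind : LinearIndependent ℝ ![u, v]) :
    (∀ w ∈ Submodule.span ℝ {u, v}, (cosHessE u v).mulVec w ∈ Submodule.span ℝ {u, v}) ∧
    (∀ w : Fin d → ℝ, w ⬝ᵥ u = 0 → w ⬝ᵥ v = 0 →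
      (cosHessE u v).mulVec w = (-(u ⬝ᵥ v) / ((enormE u) ^ 3 * enormE v)) • w) ∧
    (∀ s : ℝ, s = 1 ∨ s = -1 →
      ∃ w ∈ Submodule.span ℝ {u, v}, w ≠ 0 ∧
        (cosHessE u v).mulVec w =
          ((-(ecos u v) + s * Real.sqrt (4 - 3 * (ecos u v) ^ 2)) / (2 * (enormE u) ^ 2)) • w) := by
  have hu0 : u ≠ 0 := by simpa using hind.ne_zero 0
  have hv0 : v ≠ 0 := by simpa using hind.ne_zero 1
  have huu : (0:ℝ) < u ⬝ᵥ u := by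
    rcases lt_or_eq_of_le (Finset.sum_nonneg fun i _ => mul_self_nonneg (u i)) with h | h
    · exact h
    · exact absurd (dotProduct_self_eq_zero.mp h.symm) hu0
  have hvv : (0:ℝ) < v ⬝ᵥ v := by
    rcases lt_or_eq_of_le (Finset.sum_nonneg fun i _ => mul_self_nonneg (v i)) with h | h
    · exact h
    · exact absurd (dotProduct_self_eq_zero.mp h.symm) hv0
  have hn : 0 < enormE u := Real.sqrt_pos.mpr huu
  have hm : 0 < enormE v := Real.sqrt_pos.mpr hvv
  have hne : enormE u ≠ 0 := hn.ne'
  have hme : enormE v ≠ 0 := hm.ne'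
  have hn2 : (enormE u) ^ 2 = u ⬝ᵥ u := Real.sq_sqrt huu.le
  have hm2 : (enormE v) ^ 2 = v ⬝ᵥ v := Real.sq_sqrt hvv.le
  have hcs : (u ⬝ᵥ v) ^ 2 ≤ (u ⬝ᵥ u) * (v ⬝ᵥ v) := by
    simpa [dotProduct, sq] using Finset.sum_mul_sq_le_sq_mul_sq Finset.univ u v
  have hu_mem : u ∈ Submodule.span ℝ ({u, v} : Set (Fin d → ℝ)) :=
    Submodule.subset_span (by simp)
  have hv_mem : v ∈ Submodule.span ℝ ({u, v} : Set (Fin d → ℝ)) :=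
    Submodule.subset_span (by simp)
  refine ⟨?_, ?_, ?_⟩
  · intro w hw
    rw [hess_mulVec]
    exact Submodule.sub_mem _ (Submodule.sub_mem _ (Submodule.sub_mem _
      (Submodule.smul_mem _ _ hu_mem) (Submodule.smul_mem _ _ hw))
      (Submodule.smul_mem _ _ hu_mem)) (Submodule.smul_mem _ _ hv_mem)
  · intro w h1 h2
    rw [hess_mulVec, dotProduct_comm u w, dotProduct_comm v w, h1, h2]
    simp [neg_div]
  · intro s hs
    have hs2 : s ^ 2 = 1 := by rcases hs with h | h <;> simp [h]
    have hα2 : (0:ℝ) ≤ 4 - 3 * (ecos u v) ^ 2 := by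
      have h1 : (ecos u v) ^ 2 ≤ 1 := by
        rw [ecos, div_pow, div_le_one (by positivity)]
        calc (u ⬝ᵥ v) ^ 2 ≤ (u ⬝ᵥ u) * (v ⬝ᵥ v) := hcs
          _ = (enormE u * enormE v) ^ 2 := by rw [mul_pow, hn2, hm2]
      nlinarith
    have hr2 : (Real.sqrt (4 - 3 * (ecos u v) ^ 2)) ^ 2 = 4 - 3 * (ecos u v) ^ 2 :=
      Real.sq_sqrt hα2
    have hc : u ⬝ᵥ v = ecos u v * (enormE u * enormE v) := by
      rw [ecos]; field_simp
    refine ⟨((-(ecos u v) + s * Real.sqrt (4 - 3 * (ecos u v) ^ 2)) / (2 * (enormE u) ^ 2)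
          + 2 * (u ⬝ᵥ v) / ((enormE u) ^ 3 * enormE v)) • u
        + (-1 / (enormE u * enormE v)) • v,
      Submodule.add_mem _ (Submodule.smul_mem _ _ hu_mem) (Submodule.smul_mem _ _ hv_mem),
      ?_, ?_⟩
    · intro h0
      have hb0 := (LinearIndependent.pair_iff.mp hind _ _ h0).2
      rw [div_eq_zero_iff] at hb0
      rcases hb0 with h | h
      · norm_num at h
      · exact absurd h (by positivity)
    · apply eigen_combo
      · rw [← hn2, ← hm2]
        exact h1_fact (enormE u) (enormE v) (u ⬝ᵥ v) s
          (Real.sqrt (4 - 3 * (ecos u v) ^ 2))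
          ((-(ecos u v) + s * Real.sqrt (4 - 3 * (ecos u v) ^ 2)) / (2 * (enormE u) ^ 2))
          _ _ (ecos u v) hne hme hc hs2 hr2 rfl rfl rfl
      · rw [← hn2]
        exact h2_fact (enormE u) (enormE v) (u ⬝ᵥ v)
          ((-(ecos u v) + s * Real.sqrt (4 - 3 * (ecos u v) ^ 2)) / (2 * (enormE u) ^ 2))
          _ _ hne hme rfl rfl
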